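/- (Cyrenian Lemma) Let A ⊆ ℝᵐ, x̂ ∈ A an accumulation point of A, f : A → ℝᵏ, L : ℝᵐ → ℝᵏ linear. Then f is differentiable at x̂ with differential L if and only if for every v ∈ ℝᵐ and all sequences xₙ ∈ A, λₙ > 0 with λₙ → 0, xₙ → x̂, and (xₙ - x̂)/λₙ → v, one has (f(xₙ) - f(x̂))/λₙ → L(v). -/

import Mathlib

open Filter Metric Topology

/-- The Cyrenian Lemma. -/
theorem cyrenian_lemma {m k : ℕ}
    (A : Set (EuclideanSpace ℝ (Fin m)))
    (f : EuclideanSpace ℝ (Fin m) → EuclideanSpace ℝ (Fin k))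
    (x : EuclideanSpace ℝ (Fin m)) (hxA : x ∈ A) (hacc : AccPt x (Filter.principal A))
    (L : EuclideanSpace ℝ (Fin m) →ₗ[ℝ] EuclideanSpace ℝ (Fin k)) :
    Filter.Tendsto (fun y => ‖y - x‖⁻¹ • (f y - f x - L (y - x)))
        (𝓝[A \ {x}] x) (𝓝 0) ↔
      ∀ v : EuclideanSpace ℝ (Fin m),
        ∀ (u : ℕ → EuclideanSpace ℝ (Fin m)) (lam : ℕ → ℝ),
          (∀ n, u n ∈ A) → (∀ n, 0 < lam n) →
          Filter.Tendsto lam Filter.atTop (𝓝 0) →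
          Filter.Tendsto u Filter.atTop (𝓝 x) →
          Filter.Tendsto (fun n => (lam n)⁻¹ • (u n - x)) Filter.atTop (𝓝 v) →
          Filter.Tendsto (fun n => (lam n)⁻¹ • (f (u n) - f x)) Filter.atTop (𝓝 (L v)) := by
  have hL : Continuous L := L.continuous_of_finiteDimensional
  set g : EuclideanSpace ℝ (Fin m) → EuclideanSpace ℝ (Fin k) :=
    fun y => ‖y - x‖⁻¹ • (f y - f x - L (y - x)) with hgdef
  have hg0 : g x = 0 := by simp [hgdef]
  constructor
  · intro h v u lam huA hlam hlam0 hux hw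
    have hgA : Tendsto g (𝓝[A] x) (𝓝 0) := by
      have h2 : Tendsto g (𝓝[A \ {x}] x ⊔ 𝓝[{x}] x) (𝓝 0) := by
        rw [tendsto_sup]
        refine ⟨h, ?_⟩
        rw [nhdsWithin_singleton]
        simpa [hg0] using tendsto_pure_nhds g x
      refine h2.mono_left ?_
      rw [← nhdsWithin_union]
      refine nhdsWithin_mono x ?_
      intro y hy
      by_cases hyx : y = x <;> simp [hyx, hy]
    have hu' : Tendsto u atTop (𝓝[A] x) :=
      tendsto_nhdsWithin_iff.2 ⟨hux, Eventually.of_forall huA⟩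
    have hgu : Tendsto (fun n => g (u n)) atTop (𝓝 0) := hgA.comp hu'
    have key : ∀ n, (lam n)⁻¹ • (f (u n) - f x)
        = ‖(lam n)⁻¹ • (u n - x)‖ • g (u n) + L ((lam n)⁻¹ • (u n - x)) := by
      intro n
      rcases eq_or_ne (u n) x with h' | h'
      · simp [h', hg0]
      · have hux0 : ‖u n - x‖ ≠ 0 := by simpa [sub_eq_zero] using h'
        rw [hgdef]
        simp only [map_smul]
        rw [norm_smul, norm_inv, Real.norm_eq_abs, abs_of_pos (hlam n), smul_smul,
          mul_assoc, mul_inv_cancel₀ hux0, mul_one]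
        module
    have hnorm : Tendsto (fun n => ‖(lam n)⁻¹ • (u n - x)‖) atTop (𝓝 ‖v‖) := hw.norm
    have hLw : Tendsto (fun n => L ((lam n)⁻¹ • (u n - x))) atTop (𝓝 (L v)) :=
      (hL.tendsto v).comp hw
    have := (hnorm.smul hgu).add hLw
    simp only [smul_zero, zero_add] at this
    exact this.congr fun n => (key n).symm
  · intro h
    by_contra hc
    rw [Metric.tendsto_nhds] at hc
    push_neg at hc
    obtain ⟨ε, hε, hfreq⟩ := hc
    simp only [← not_lt] at hfreq
    have hfreq' : ∃ᶠ y in 𝓝[A \ {x}] x, ε ≤ ‖g y‖ := by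
      refine hfreq.mono ?_
      intro y hy
      simpa [dist_eq_norm] using not_lt.1 hy
    have hNB : (𝓝[A \ {x}] x).NeBot := by
      rw [Set.diff_eq, Set.inter_comm, nhdsWithin_inter']
      exact hacc
    have hex : ∀ n : ℕ, ∃ y, y ∈ A \ {x} ∧ dist y x < 1 / (n + 1) ∧ ε ≤ ‖g y‖ := by
      intro n
      have h1 : ∀ᶠ y in 𝓝[A \ {x}] x, y ∈ A \ {x} := self_mem_nhdsWithin
      have h2 : ∀ᶠ y in 𝓝[A \ {x}] x, dist y x < 1 / (n + 1) := by
        have : Metric.ball x (1 / (n + 1)) ∈ 𝓝[A \ {x}] x :=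
          mem_nhdsWithin_of_mem_nhds (Metric.ball_mem_nhds x (by positivity))
        filter_upwards [this] with y hy using hy
      exact ((hfreq'.and_eventually (h1.and h2)).mono (by tauto)).exists
    choose u hu hdist hgu using hex
    set lam : ℕ → ℝ := fun n => ‖u n - x‖ with hlamdef
    have hlampos : ∀ n, 0 < lam n := by
      intro n
      have := (hu n).2
      simp only [Set.mem_singleton_iff] at this
      simpa [hlamdef, norm_pos_iff, sub_eq_zero] using this
    have hlam0 : Tendsto lam atTop (𝓝 0) := by
      refine squeeze_zero (fun n => (hlampos n).le) (fun n => ?_)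
        tendsto_one_div_add_atTop_nhds_zero_nat
      have := hdist n
      rw [dist_eq_norm] at this
      exact this.le
    have hux : Tendsto u atTop (𝓝 x) := by
      rw [tendsto_iff_dist_tendsto_zero]
      simpa [dist_eq_norm] using hlam0
    set w : ℕ → EuclideanSpace ℝ (Fin m) := fun n => (lam n)⁻¹ • (u n - x) with hwdef
    have hwmem : ∀ n, w n ∈ Metric.sphere (0 : EuclideanSpace ℝ (Fin m)) 1 := by
      intro n
      simp only [mem_sphere_iff_norm, sub_zero, hwdef, norm_smul, norm_inv,
        Real.norm_eq_abs, abs_of_pos (hlampos n)]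
      exact inv_mul_cancel₀ (hlampos n).ne'
    obtain ⟨v, hv, φ, hφ, hwφ⟩ :=
      (isCompact_sphere (0 : EuclideanSpace ℝ (Fin m)) 1).tendsto_subseq hwmem
    have hconc := h v (u ∘ φ) (lam ∘ φ) (fun n => (hu (φ n)).1) (fun n => hlampos (φ n))
      (hlam0.comp hφ.tendsto_atTop) (hux.comp hφ.tendsto_atTop) hwφ
    have hLw : Tendsto (fun n => L (w (φ n))) atTop (𝓝 (L v)) := (hL.tendsto v).comp hwφ
    have hgid : ∀ n, g (u n) = (lam n)⁻¹ • (f (u n) - f x) - L (w n) := by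
      intro n
      simp only [hgdef, hwdef, hlamdef, map_smul, map_sub, smul_sub]
    have hgto : Tendsto (fun n => g (u (φ n))) atTop (𝓝 0) := by
      have := hconc.sub hLw
      rw [sub_self] at this
      simpa [hgid] using this
    have : ∀ᶠ n in atTop, ‖g (u (φ n))‖ < ε := by
      have := hgto.norm
      rw [norm_zero] at this
      exact this.eventually_lt_const hε
    obtain ⟨n, hn⟩ := this.exists
    exact absurd (hgu (φ n)) (not_le.2 hn)
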